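/- For each E < E₀ there exists a finite constant C, depending only on φ₋, φ₊ and E, such that 𝓖_E(ρ,φ) ≤ C for every ρ ∈ 𝓜 and every φ ∈ 𝓕_E. -/

import Mathlib

open Real MeasureTheory Set Filter Topology Function

noncomputable section

/-- Mobility `χ(a) = a(1−a)`. -/
def chi (a : ℝ) : ℝ := a * (1 - a)

/-- The set `𝓜`: measurable density profiles on `[−1,1]` with values in `[0,1]`. -/
def memM (ρ : ℝ → ℝ) : Prop :=
  Measurable ρ ∧ ∀ u ∈ Set.Icc (-1:ℝ) 1, ρ u ∈ Set.Icc (0:ℝ) 1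

/-- `φ ∈ 𝓕_E`, with explicit derivative function `d`: `φ` is `C¹` on `[−1,1]` with
Lipschitz derivative `d`, `φ(−1) = φ₋`, `φ(1) = φ₊`, and `d > max 0 E` on `[−1,1]`. -/
def memF (φm φp E : ℝ) (φ d : ℝ → ℝ) : Prop :=
  (∀ u ∈ Set.Icc (-1:ℝ) 1, HasDerivWithinAt φ (d u) (Set.Icc (-1:ℝ) 1) u) ∧
  (∃ L : NNReal, LipschitzOnWith L d (Set.Icc (-1:ℝ) 1)) ∧
  φ (-1) = φm ∧ φ 1 = φp ∧
  (∀ u ∈ Set.Icc (-1:ℝ) 1, max 0 E < d u)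

/-- The functional `𝓖_E(ρ,φ)` (with `d = φ'`), including the `E = 0` case.
Recall the convention `0 log 0 = 0` (in Lean `Real.log 0 = 0`). -/
def GEint (E A : ℝ) (ρ φ d : ℝ → ℝ) : ℝ :=
  ∫ u in (-1:ℝ)..1,
    (ρ u * Real.log (ρ u) + (1 - ρ u) * Real.log (1 - ρ u)
      + (1 - ρ u) * φ u - Real.log (1 + Real.exp (φ u))
      + (if E = 0 then Real.log (d u) + 1
         else E⁻¹ * (d u * Real.log (d u) - (d u - E) * Real.log (d u - E)))
      - A)
/-- log x - log y ≤ (x-y)/y for positive x, y. -/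
lemma log_sub_log_le (x y : ℝ) (hx : 0 < x) (hy : 0 < y) :
    Real.log x - Real.log y ≤ (x - y) / y := by
  have h := Real.log_le_sub_one_of_pos (show 0 < x / y by positivity)
  rw [Real.log_div hx.ne' hy.ne'] at h
  have : x / y - 1 = (x - y) / y := by field_simp
  linarith [h, this.le]

/-- Entropy is nonpositive on [0,1]. -/
lemma ent_nonpos {x : ℝ} (h0 : 0 ≤ x) (h1 : x ≤ 1) : x * Real.log x ≤ 0 :=
  mul_nonpos_iff.mpr (Or.inl ⟨h0, Real.log_nonpos h0 h1⟩)

/-- Linear term bound. -/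
lemma lin_le {t : ℝ} (h0 : 0 ≤ t) (h1 : t ≤ 1) (x : ℝ) :
    t * x ≤ Real.log (1 + Real.exp x) := by
  rcases le_or_gt x 0 with hx | hx
  · have : t * x ≤ 0 := mul_nonpos_iff.mpr (Or.inl ⟨h0, hx⟩)
    have h2 : (0:ℝ) ≤ Real.log (1 + Real.exp x) := by
      apply Real.log_nonneg; linarith [Real.exp_pos x]
    linarith
  · have h1' : t * x ≤ x := by nlinarith
    have h2 : x ≤ Real.log (1 + Real.exp x) := by
      have := Real.log_le_log (Real.exp_pos x) (by linarith : Real.exp x ≤ 1 + Real.exp x)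
      rwa [Real.log_exp] at this
    linarith

/-- Pointwise tangent-line bound for the derivative term. -/
lemma T_bound (E m D : ℝ) (hm : 0 < m) (hD : max 0 E < D) :
    (if E = 0 then Real.log D + 1
      else E⁻¹ * (D * Real.log D - (D - E) * Real.log (D - E)))
    ≤ 1 + Real.log (m + max 0 (-E)) + (D - m) / (m + max 0 (-E)) := by
  have hDpos : 0 < D := lt_of_le_of_lt (le_max_left 0 E) hD
  have hcnn : 0 ≤ max 0 (-E) := le_max_left 0 (-E)
  have hmc : 0 < m + max 0 (-E) := by linarith
  have hDc : 0 < D + max 0 (-E) := by linarith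
  have step2 : Real.log (D + max 0 (-E)) ≤
      Real.log (m + max 0 (-E)) + (D - m) / (m + max 0 (-E)) := by
    have := log_sub_log_le (D + max 0 (-E)) (m + max 0 (-E)) hDc hmc
    have heq : (D + max 0 (-E) - (m + max 0 (-E))) = D - m := by ring
    rw [heq] at this; linarith
  have step1 : (if E = 0 then Real.log D + 1
      else E⁻¹ * (D * Real.log D - (D - E) * Real.log (D - E)))
      ≤ 1 + Real.log (D + max 0 (-E)) := by
    split_ifs with h
    · subst h; simp only [neg_zero, max_self, add_zero]; linarith
    · rcases lt_or_gt_of_ne h with hEneg | hEpos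
      · have hc : max 0 (-E) = -E := max_eq_right (by linarith)
        rw [hc]
        have hDE : 0 < D - E := by linarith
        rw [inv_mul_eq_div, div_le_iff_of_neg hEneg]
        have key := log_sub_log_le (D - E) D hDE hDpos
        have key2 : D * (Real.log (D - E) - Real.log D) ≤ -E := by
          have h5 := mul_le_mul_of_nonneg_left key hDpos.le
          have heq : D * ((D - E - D) / D) = -E := by field_simp; ring
          linarith [h5, heq.le]
        have hrw : D + -E = D - E := by ring
        rw [hrw]
        nlinarith [key2]
      · have hc : max 0 (-E) = 0 := max_eq_left (by linarith)
        rw [hc, add_zero]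
        have hDE : 0 < D - E := by
          have := lt_of_le_of_lt (le_max_right 0 E) hD; linarith
        rw [inv_mul_le_iff₀ hEpos]
        have key := log_sub_log_le D (D - E) hDpos hDE
        have key2 : (D - E) * (Real.log D - Real.log (D - E)) ≤ E := by
          have := mul_le_mul_of_nonneg_left key hDE.le
          have heq : (D - E) * ((D - (D - E)) / (D - E)) = E := by field_simp; ring
          linarith [this, heq.le]
        nlinarith [key2]
  linarith

/-- For `E < E₀` the functional `𝓖_E` is bounded above, uniformly over `ρ ∈ 𝓜`
and `φ ∈ 𝓕_E`. -/
theorem stmt2 (ρm ρp φm φp E0 : ℝ)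
    (h0 : 0 < ρm) (h1 : ρm < ρp) (h2 : ρp < 1)
    (hφm : φm = Real.log (ρm / (1 - ρm))) (hφp : φp = Real.log (ρp / (1 - ρp)))
    (hE0 : E0 = (φp - φm) / 2) (E J A : ℝ) (hE : E < E0)
    (hJneg : J ≤ 0) (hJeq : (1/2) * (∫ r in ρm..ρp, (E * chi r - J)⁻¹) = 1)
    (hA : A = if E = 0 then Real.log ((ρp - ρm) / 2) + 1
      else Real.log (-J) + (1/2) * ∫ r in ρm..ρp, (E * chi r)⁻¹ * Real.log (1 - E * chi r / J)) :
    ∃ C : ℝ, ∀ ρ φ d : ℝ → ℝ, memM ρ → memF φm φp E φ d →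
      GEint E A ρ φ d ≤ C := by
  -- E0 > 0
  have hφlt : φm < φp := by
    rw [hφm, hφp]
    apply Real.log_lt_log (div_pos h0 (by linarith))
    rw [div_lt_div_iff₀ (by linarith) (by linarith)]
    nlinarith
  have hm : 0 < E0 := by rw [hE0]; linarith
  set c : ℝ := max 0 (-E) with hc
  have hcnn : 0 ≤ c := le_max_left 0 (-E)
  have hmc : 0 < E0 + c := by linarith
  set s : ℝ := (E0 + c)⁻¹ with hs
  set K : ℝ := 1 + Real.log (E0 + c) - A - E0 * s with hK
  refine ⟨2 * K + s * (φp - φm), ?_⟩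
  rintro ρ φ d ⟨hρmeas, hρmem⟩ ⟨hder, ⟨L, hLip⟩, hφa, hφb, hdlt⟩
  have huIcc : uIcc (-1:ℝ) 1 = Icc (-1:ℝ) 1 := uIcc_of_le (by norm_num)
  have hφc : ContinuousOn φ (Icc (-1:ℝ) 1) := fun u hu => (hder u hu).continuousWithinAt
  have hdc : ContinuousOn d (Icc (-1:ℝ) 1) := hLip.continuousOn
  have hdpos : ∀ u ∈ Icc (-1:ℝ) 1, 0 < d u :=
    fun u hu => lt_of_le_of_lt (le_max_left 0 E) (hdlt u hu)
  have hdE : ∀ u ∈ Icc (-1:ℝ) 1, E < d u :=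
    fun u hu => lt_of_le_of_lt (le_max_right 0 E) (hdlt u hu)
  -- the integrand
  set T : ℝ → ℝ := fun u => (if E = 0 then Real.log (d u) + 1
      else E⁻¹ * (d u * Real.log (d u) - (d u - E) * Real.log (d u - E))) with hT
  set B : ℝ → ℝ := fun u => ρ u * Real.log (ρ u) + (1 - ρ u) * Real.log (1 - ρ u)
      + (1 - ρ u) * φ u with hB
  set Cc : ℝ → ℝ := fun u => - Real.log (1 + Real.exp (φ u)) + T u - A with hCc
  set F : ℝ → ℝ := fun u => (ρ u * Real.log (ρ u) + (1 - ρ u) * Real.log (1 - ρ u)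
      + (1 - ρ u) * φ u - Real.log (1 + Real.exp (φ u))
      + (if E = 0 then Real.log (d u) + 1
         else E⁻¹ * (d u * Real.log (d u) - (d u - E) * Real.log (d u - E)))
      - A) with hF
  have hFBC : ∀ u, F u = B u + Cc u := by intro u; simp only [hF, hB, hCc, hT]; ring
  -- continuity of Cc
  have hTc : ContinuousOn T (Icc (-1:ℝ) 1) := by
    rw [hT]
    split_ifs with h
    · exact (hdc.log (fun u hu => (hdpos u hu).ne')).add continuousOn_const
    · exact continuousOn_const.mul
        ((hdc.mul (hdc.log (fun u hu => (hdpos u hu).ne'))).sub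
          ((hdc.sub continuousOn_const).mul
            ((hdc.sub continuousOn_const).log
              (fun u hu => sub_ne_zero.mpr (ne_of_gt (hdE u hu))))))
  have hCcc : ContinuousOn Cc (Icc (-1:ℝ) 1) := by
    rw [hCc]
    exact (((continuousOn_const.add hφc.rexp).log
      (fun u hu => (show (0:ℝ) < 1 + Real.exp (φ u) by positivity).ne')).neg.add hTc).sub continuousOn_const
  have hCci : IntervalIntegrable Cc volume (-1) 1 := by
    apply ContinuousOn.intervalIntegrable; rwa [huIcc]
  -- integrability of B
  obtain ⟨M, hM⟩ := isCompact_Icc.exists_bound_of_continuousOn hφc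
  have hent : ∀ x : ℝ, x ∈ Icc (0:ℝ) 1 → |x * Real.log x| ≤ 1 := by
    intro x hx
    rcases eq_or_lt_of_le hx.1 with h | h
    · simp [← h]
    · have hl : x * Real.log x ≤ 0 := ent_nonpos hx.1 hx.2
      have : -(x * Real.log x) = x * Real.log x⁻¹ := by rw [Real.log_inv]; ring
      have h2 : Real.log x⁻¹ ≤ x⁻¹ - 1 := Real.log_le_sub_one_of_pos (by positivity)
      have h3 : x * Real.log x⁻¹ ≤ x * (x⁻¹ - 1) := by
        apply mul_le_mul_of_nonneg_left h2 hx.1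
      have h4 : x * (x⁻¹ - 1) = 1 - x := by field_simp
      rw [abs_of_nonpos hl]
      linarith [this.le, h4.le, hx.1]
  have hBi : IntervalIntegrable B volume (-1) 1 := by
    constructor
    · -- IntegrableOn B (Ioc (-1) 1)
      have hφae : AEMeasurable φ (volume.restrict (Ioc (-1:ℝ) 1)) :=
        (hφc.mono Ioc_subset_Icc_self).aemeasurable measurableSet_Ioc
      have hmeas : AEStronglyMeasurable B (volume.restrict (Ioc (-1:ℝ) 1)) := by
        rw [hB]
        refine AEMeasurable.aestronglyMeasurable ?_
        exact (((Real.continuous_mul_log.measurable.comp hρmeas).aemeasurable).add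
          ((Real.continuous_mul_log.measurable.comp (measurable_const.sub hρmeas)).aemeasurable)).add
          (((measurable_const.sub hρmeas).aemeasurable).mul hφae)
      refine Integrable.mono' (integrable_const (2 + M)) hmeas ?_
      rw [ae_restrict_iff' measurableSet_Ioc]
      filter_upwards with u hu
      have hu' : u ∈ Icc (-1:ℝ) 1 := Ioc_subset_Icc_self hu
      have hρu := hρmem u hu'
      have h1' : |ρ u * Real.log (ρ u)| ≤ 1 := hent _ hρu
      have h2' : |(1 - ρ u) * Real.log (1 - ρ u)| ≤ 1 := by
        apply hent; constructor <;> [linarith [hρu.2]; linarith [hρu.1]]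
      have h3' : |(1 - ρ u) * φ u| ≤ M := by
        rw [abs_mul]
        have : |1 - ρ u| ≤ 1 := by rw [abs_le]; constructor <;>
          [linarith [hρu.2]; linarith [hρu.1]]
        have hMu := hM u hu'
        rw [Real.norm_eq_abs] at hMu
        have hM0 : 0 ≤ M := le_trans (abs_nonneg _) hMu
        calc |1 - ρ u| * |φ u| ≤ 1 * M := by
              apply mul_le_mul this hMu (abs_nonneg _) zero_le_one
          _ = M := one_mul M
      rw [Real.norm_eq_abs, hB]
      calc |ρ u * Real.log (ρ u) + (1 - ρ u) * Real.log (1 - ρ u) + (1 - ρ u) * φ u|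
          ≤ |ρ u * Real.log (ρ u) + (1 - ρ u) * Real.log (1 - ρ u)| + |(1 - ρ u) * φ u| :=
            abs_add_le _ _
        _ ≤ |ρ u * Real.log (ρ u)| + |(1 - ρ u) * Real.log (1 - ρ u)| + |(1 - ρ u) * φ u| := by
            linarith [abs_add_le (ρ u * Real.log (ρ u)) ((1 - ρ u) * Real.log (1 - ρ u))]
        _ ≤ 2 + M := by linarith
    · have : Ioc (1:ℝ) (-1) = ∅ := Ioc_eq_empty (by norm_num)
      rw [this]; exact integrableOn_empty
  have hFi : IntervalIntegrable F volume (-1) 1 := by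
    have : F = fun u => B u + Cc u := funext hFBC
    rw [this]; exact hBi.add hCci
  -- integrability of G
  set G : ℝ → ℝ := fun u => K + s * d u with hG
  have hGi : IntervalIntegrable G volume (-1) 1 := by
    apply ContinuousOn.intervalIntegrable
    rw [huIcc]; exact continuousOn_const.add (continuousOn_const.mul hdc)
  -- pointwise bound
  have hmono : ∀ u ∈ Icc (-1:ℝ) 1, F u ≤ G u := by
    intro u hu
    have hρu := hρmem u hu
    have e1 : ρ u * Real.log (ρ u) ≤ 0 := ent_nonpos hρu.1 hρu.2
    have e2 : (1 - ρ u) * Real.log (1 - ρ u) ≤ 0 := by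
      apply ent_nonpos <;> [linarith [hρu.2]; linarith [hρu.1]]
    have e3 : (1 - ρ u) * φ u ≤ Real.log (1 + Real.exp (φ u)) := by
      apply lin_le <;> [linarith [hρu.2]; linarith [hρu.1]]
    have e4 := T_bound E E0 (d u) hm (hdlt u hu)
    rw [← hc] at e4
    have hdiv : (d u - E0) / (E0 + c) = (d u - E0) * s := by rw [hs, div_eq_mul_inv]
    rw [hdiv] at e4
    have hms : E0 * s + c * s = 1 := by
      rw [hs]; field_simp
    simp only [hF, hG, hK]
    nlinarith [e1, e2, e3, e4]
  -- FTC for d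
  have hFTC : ∫ u in (-1:ℝ)..1, d u = φ 1 - φ (-1) := by
    apply intervalIntegral.integral_eq_sub_of_hasDeriv_right_of_le (by norm_num) hφc
    · intro x hx
      exact ((hder x (Ioo_subset_Icc_self hx)).hasDerivAt
        (Icc_mem_nhds hx.1 hx.2)).hasDerivWithinAt
    · apply ContinuousOn.intervalIntegrable; rwa [huIcc]
  -- conclude
  have hint : GEint E A ρ φ d = ∫ u in (-1:ℝ)..1, F u := by rfl
  have hdint : IntervalIntegrable (fun u => s * d u) volume (-1) 1 := by
    apply ContinuousOn.intervalIntegrable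
    rw [huIcc]; exact continuousOn_const.mul hdc
  have hGval : ∫ u in (-1:ℝ)..1, G u = 2 * K + s * (φp - φm) := by
    rw [hG]
    rw [intervalIntegral.integral_add (intervalIntegrable_const) hdint,
      intervalIntegral.integral_const, intervalIntegral.integral_const_mul, hFTC, hφa, hφb,
      smul_eq_mul]
    ring
  calc GEint E A ρ φ d = ∫ u in (-1:ℝ)..1, F u := hint
    _ ≤ ∫ u in (-1:ℝ)..1, G u :=
        intervalIntegral.integral_mono_on (by norm_num) hFi hGi hmono
    _ = 2 * K + s * (φp - φm) := hGval
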